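/- For every real number α > 1, the series ∑_{n=1}^{∞} 1/Z(n)^α is convergent. -/

import Mathlib

/-- The m-th triangular number. -/
def T (m : ℕ) : ℕ := m * (m + 1) / 2

/-- The pseudo-Smarandache function: the least positive m with n ∣ T m. -/
noncomputable def Z (n : ℕ) : ℕ := sInf {m : ℕ | 0 < m ∧ n ∣ T m}

open ENNReal NNReal


noncomputable def uF (α : ℝ) (m : ℕ) : ℝ≥0∞ := if 0 < m then (m : ℝ≥0∞) ^ (-α) else 0

noncomputable def DF (k : ℕ) : ℝ≥0∞ := ∑' a : ℕ, (if a ∣ k then (1 : ℝ≥0∞) else 0)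

section
variable {α : ℝ}

lemma rne_top (hα : 1 < α) (x : ℝ≥0∞) (hx : x ≠ 0) : x ^ (-α) ≠ ⊤ := by
  rw [ENNReal.rpow_neg, ne_eq, ENNReal.inv_eq_top]
  intro h
  rcases ENNReal.rpow_eq_zero_iff.mp h with ⟨h1, _⟩ | ⟨_, h2⟩
  · exact hx h1
  · linarith

lemma rne_zero (hα : 1 < α) (x : ℝ≥0∞) (hx : x ≠ ⊤) : x ^ (-α) ≠ 0 := by
  rw [ENNReal.rpow_neg, ne_eq, ENNReal.inv_eq_zero]
  exact ENNReal.rpow_ne_top_of_nonneg (by linarith) hx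

lemma inner_eq (hα : 1 < α) (m : ℕ) :
    (∑' q : ℕ × ℕ, (if 0 < m ∧ q.1 ∣ m ∧ q.2 ∣ m + 1 then (m : ℝ≥0∞) ^ (-α) else 0))
      = uF α m * (DF m * DF (m + 1)) := by
  rw [ENNReal.tsum_prod']
  have h : ∀ a b : ℕ, (if 0 < m ∧ a ∣ m ∧ b ∣ m + 1 then (m : ℝ≥0∞) ^ (-α) else 0)
      = (uF α m * (if a ∣ m then 1 else 0)) * (if b ∣ m + 1 then 1 else 0) := by
    intro a b
    unfold uF
    by_cases h1 : 0 < m <;> by_cases h2 : a ∣ m <;> by_cases h3 : b ∣ m + 1 <;>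
      simp [h1, h2, h3]
  simp_rw [h, ENNReal.tsum_mul_left, ENNReal.tsum_mul_right, ENNReal.tsum_mul_left]
  unfold DF
  rw [mul_assoc]

lemma inner_eq2 (hα : 1 < α) (m : ℕ) :
    uF α m * (DF m * DF m)
      = ∑' q : ℕ × ℕ, (if 0 < m ∧ Nat.lcm q.1 q.2 ∣ m then (m : ℝ≥0∞) ^ (-α) else 0) := by
  rw [ENNReal.tsum_prod']
  have h : ∀ a b : ℕ, (if 0 < m ∧ Nat.lcm a b ∣ m then (m : ℝ≥0∞) ^ (-α) else 0)
      = (uF α m * (if a ∣ m then 1 else 0)) * (if b ∣ m then 1 else 0) := by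
    intro a b
    unfold uF
    have hl : Nat.lcm a b ∣ m ↔ a ∣ m ∧ b ∣ m := Nat.lcm_dvd_iff
    by_cases h1 : 0 < m <;> by_cases h2 : a ∣ m <;> by_cases h3 : b ∣ m <;>
      simp [h1, h2, h3, hl]
  simp_rw [h, ENNReal.tsum_mul_left, ENNReal.tsum_mul_right, ENNReal.tsum_mul_left]
  unfold DF
  rw [mul_assoc]

lemma mult_sum (hα : 1 < α) (L : ℕ) (hL : 0 < L) :
    (∑' m : ℕ, (if 0 < m ∧ L ∣ m then (m : ℝ≥0∞) ^ (-α) else 0))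
      = (L : ℝ≥0∞) ^ (-α) * ∑' k : ℕ, ((k : ℝ≥0∞) + 1) ^ (-α) := by
  have hgz : ∀ j : ℕ, ((((j + 1) * L : ℕ) : ℝ≥0∞)) ^ (-α) ≠ 0 := fun j =>
    rne_zero hα _ (ENNReal.natCast_ne_top _)
  have key : (∑' m : ℕ, (if 0 < m ∧ L ∣ m then (m : ℝ≥0∞) ^ (-α) else 0))
      = ∑' j : ℕ, ((((j + 1) * L : ℕ) : ℝ≥0∞)) ^ (-α) := by
    apply tsum_eq_tsum_of_ne_zero_bij (fun x => ((x : ℕ) + 1) * L)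
    · intro x y hxy
      have h' : ((x : ℕ) + 1) * L = ((y : ℕ) + 1) * L := hxy
      have h'' := Nat.eq_of_mul_eq_mul_right hL h'
      exact Subtype.ext (by omega)
    · intro m hm
      simp only [Function.mem_support, ne_eq, ite_eq_right_iff, not_forall] at hm
      obtain ⟨⟨hm0, hLm⟩, -⟩ := hm
      obtain ⟨c, rfl⟩ := hLm
      have hc : 0 < c := Nat.pos_of_ne_zero (by rintro rfl; simp at hm0)
      refine ⟨⟨c - 1, hgz (c - 1)⟩, ?_⟩
      simp only
      rw [Nat.sub_add_cancel hc, mul_comm]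
    · intro x
      have h1 : 0 < ((x : ℕ) + 1) * L := by positivity
      have h2 : L ∣ ((x : ℕ) + 1) * L := dvd_mul_left L _
      simp [h1, h2]
  rw [key]
  have hterm : ∀ j : ℕ, ((((j + 1) * L : ℕ) : ℝ≥0∞)) ^ (-α)
      = (L : ℝ≥0∞) ^ (-α) * ((j : ℝ≥0∞) + 1) ^ (-α) := by
    intro j
    push_cast
    rw [ENNReal.mul_rpow_of_ne_top (by simp : ((j : ℝ≥0∞) + 1) ≠ ⊤) (ENNReal.natCast_ne_top L)]
    exact mul_comm _ _
  simp_rw [hterm]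
  rw [ENNReal.tsum_mul_left]
lemma lcm_sum (hα : 1 < α) :
    (∑' p : ℕ × ℕ, (if 0 < Nat.lcm p.1 p.2 then ((Nat.lcm p.1 p.2 : ℕ) : ℝ≥0∞) ^ (-α) else 0))
      ≤ (∑' k : ℕ, ((k : ℝ≥0∞) + 1) ^ (-α)) * ((∑' k : ℕ, ((k : ℝ≥0∞) + 1) ^ (-α)) *
          (∑' k : ℕ, ((k : ℝ≥0∞) + 1) ^ (-α))) := by
  -- Step 1: reindex to positive pairs
  have step1 : (∑' p : ℕ × ℕ, (if 0 < Nat.lcm p.1 p.2 then ((Nat.lcm p.1 p.2 : ℕ) : ℝ≥0∞) ^ (-α) else 0))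
      = ∑' p : ℕ × ℕ, ((Nat.lcm (p.1 + 1) (p.2 + 1) : ℕ) : ℝ≥0∞) ^ (-α) := by
    apply tsum_eq_tsum_of_ne_zero_bij (fun x => ((x : ℕ × ℕ).1 + 1, (x : ℕ × ℕ).2 + 1))
    · intro x y hxy
      have h1 : ((x : ℕ × ℕ).1 + 1, (x : ℕ × ℕ).2 + 1) = ((y : ℕ × ℕ).1 + 1, (y : ℕ × ℕ).2 + 1) := hxy
      have h2 := Prod.ext_iff.mp h1
      apply Subtype.ext
      exact Prod.ext (by omega) (by omega)
    · rintro ⟨a, b⟩ hm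
      simp only [Function.mem_support, ne_eq, ite_eq_right_iff, not_forall] at hm
      obtain ⟨hpos, -⟩ := hm
      have ha : 0 < a := Nat.pos_of_ne_zero (by rintro rfl; simp [Nat.lcm] at hpos)
      have hb : 0 < b := Nat.pos_of_ne_zero (by rintro rfl; simp [Nat.lcm] at hpos)
      have hg : ((Nat.lcm ((a - 1) + 1) ((b - 1) + 1) : ℕ) : ℝ≥0∞) ^ (-α) ≠ 0 :=
        rne_zero hα _ (ENNReal.natCast_ne_top _)
      exact ⟨⟨(a - 1, b - 1), hg⟩, by simp only; rw [Nat.sub_add_cancel ha, Nat.sub_add_cancel hb]⟩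
    · intro x
      have : 0 < Nat.lcm ((x : ℕ × ℕ).1 + 1) ((x : ℕ × ℕ).2 + 1) :=
        Nat.pos_of_ne_zero (Nat.lcm_ne_zero (by omega) (by omega))
      simp [this]
  rw [step1]
  -- Step 2: injection into triples
  have step2 : (∑' p : ℕ × ℕ, ((Nat.lcm (p.1 + 1) (p.2 + 1) : ℕ) : ℝ≥0∞) ^ (-α))
      ≤ ∑' r : ℕ × ℕ × ℕ, ((r.1 : ℝ≥0∞) + 1) ^ (-α) *
          (((r.2.1 : ℝ≥0∞) + 1) ^ (-α) * ((r.2.2 : ℝ≥0∞) + 1) ^ (-α)) := by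
    set e : ℕ × ℕ → ℕ × ℕ × ℕ := fun p =>
      (Nat.gcd (p.1 + 1) (p.2 + 1) - 1,
       (p.1 + 1) / Nat.gcd (p.1 + 1) (p.2 + 1) - 1,
       (p.2 + 1) / Nat.gcd (p.1 + 1) (p.2 + 1) - 1) with he_def
    have hfacts : ∀ p : ℕ × ℕ,
        0 < Nat.gcd (p.1 + 1) (p.2 + 1) ∧
        Nat.gcd (p.1 + 1) (p.2 + 1) * ((p.1 + 1) / Nat.gcd (p.1 + 1) (p.2 + 1)) = p.1 + 1 ∧
        Nat.gcd (p.1 + 1) (p.2 + 1) * ((p.2 + 1) / Nat.gcd (p.1 + 1) (p.2 + 1)) = p.2 + 1 ∧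
        0 < (p.1 + 1) / Nat.gcd (p.1 + 1) (p.2 + 1) ∧
        0 < (p.2 + 1) / Nat.gcd (p.1 + 1) (p.2 + 1) := by
      intro p
      have hg : 0 < Nat.gcd (p.1 + 1) (p.2 + 1) := Nat.gcd_pos_of_pos_left _ (by omega)
      have h1 := Nat.mul_div_cancel' (Nat.gcd_dvd_left (p.1 + 1) (p.2 + 1))
      have h2 := Nat.mul_div_cancel' (Nat.gcd_dvd_right (p.1 + 1) (p.2 + 1))
      refine ⟨hg, h1, h2, ?_, ?_⟩
      · rcases Nat.eq_zero_or_pos ((p.1 + 1) / Nat.gcd (p.1 + 1) (p.2 + 1)) with h | h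
        · rw [h, Nat.mul_zero] at h1; omega
        · exact h
      · rcases Nat.eq_zero_or_pos ((p.2 + 1) / Nat.gcd (p.1 + 1) (p.2 + 1)) with h | h
        · rw [h, Nat.mul_zero] at h2; omega
        · exact h
    have hlcm : ∀ p : ℕ × ℕ, Nat.lcm (p.1 + 1) (p.2 + 1) =
        Nat.gcd (p.1 + 1) (p.2 + 1) * ((p.1 + 1) / Nat.gcd (p.1 + 1) (p.2 + 1)) *
          ((p.2 + 1) / Nat.gcd (p.1 + 1) (p.2 + 1)) := by
      intro p
      obtain ⟨hg, h1, h2, -, -⟩ := hfacts p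
      have hmul := Nat.gcd_mul_lcm (p.1 + 1) (p.2 + 1)
      apply Nat.eq_of_mul_eq_mul_left hg
      calc Nat.gcd (p.1 + 1) (p.2 + 1) * Nat.lcm (p.1 + 1) (p.2 + 1)
          = (p.1 + 1) * (p.2 + 1) := hmul
        _ = (Nat.gcd (p.1 + 1) (p.2 + 1) * ((p.1 + 1) / Nat.gcd (p.1 + 1) (p.2 + 1))) *
              (Nat.gcd (p.1 + 1) (p.2 + 1) * ((p.2 + 1) / Nat.gcd (p.1 + 1) (p.2 + 1))) := by
            rw [h1, h2]
        _ = Nat.gcd (p.1 + 1) (p.2 + 1) *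
              (Nat.gcd (p.1 + 1) (p.2 + 1) * ((p.1 + 1) / Nat.gcd (p.1 + 1) (p.2 + 1)) *
                ((p.2 + 1) / Nat.gcd (p.1 + 1) (p.2 + 1))) := by ring
    have he_inj : Function.Injective e := by
      intro p q hpq
      obtain ⟨hgp, h1p, h2p, hxp, hyp⟩ := hfacts p
      obtain ⟨hgq, h1q, h2q, hxq, hyq⟩ := hfacts q
      rw [he_def] at hpq
      simp only [Prod.mk.injEq] at hpq
      obtain ⟨e1, e2, e3⟩ := hpq
      have hg : Nat.gcd (p.1 + 1) (p.2 + 1) = Nat.gcd (q.1 + 1) (q.2 + 1) := by omega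
      have hx : (p.1 + 1) / Nat.gcd (p.1 + 1) (p.2 + 1) = (q.1 + 1) / Nat.gcd (q.1 + 1) (q.2 + 1) := by omega
      have hy : (p.2 + 1) / Nat.gcd (p.1 + 1) (p.2 + 1) = (q.2 + 1) / Nat.gcd (q.1 + 1) (q.2 + 1) := by omega
      have hp1 : p.1 = q.1 := by
        have := h1p
        rw [hx, hg, h1q] at this
        omega
      have hp2 : p.2 = q.2 := by
        have := h2p
        rw [hy, hg, h2q] at this
        omega
      exact Prod.ext hp1 hp2
    apply ENNReal.summable.tsum_le_tsum_of_inj e he_inj (fun c _ => zero_le) _ ENNReal.summable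
    intro p
    obtain ⟨hg, h1, h2, hx, hy⟩ := hfacts p
    rw [he_def]
    simp only
    have harr : ∀ n : ℕ, 0 < n → ((n - 1 : ℕ) : ℝ≥0∞) + 1 = (n : ℝ≥0∞) := by
      intro n hn
      norm_cast
      omega
    rw [harr _ hg, harr _ hx, harr _ hy]
    have hc : ((Nat.lcm (p.1 + 1) (p.2 + 1) : ℕ) : ℝ≥0∞)
        = ((Nat.gcd (p.1 + 1) (p.2 + 1) : ℕ) : ℝ≥0∞) *
            ((((p.1 + 1) / Nat.gcd (p.1 + 1) (p.2 + 1) : ℕ) : ℝ≥0∞) *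
              (((p.2 + 1) / Nat.gcd (p.1 + 1) (p.2 + 1) : ℕ) : ℝ≥0∞)) := by
      rw [hlcm p]
      push_cast
      ring
    rw [hc,
      ENNReal.mul_rpow_of_ne_top (ENNReal.natCast_ne_top _)
        (ENNReal.mul_ne_top (ENNReal.natCast_ne_top _) (ENNReal.natCast_ne_top _)),
      ENNReal.mul_rpow_of_ne_top (ENNReal.natCast_ne_top _) (ENNReal.natCast_ne_top _)]
  refine step2.trans (le_of_eq ?_)
  rw [ENNReal.tsum_prod']
  simp_rw [ENNReal.tsum_mul_left]
  rw [ENNReal.tsum_mul_right]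
  congr 1
  rw [ENNReal.tsum_prod']
  simp_rw [ENNReal.tsum_mul_left]
  rw [ENNReal.tsum_mul_right]

lemma uF_le (hα : 1 < α) (m : ℕ) :
    uF α m ≤ (2 : ℝ≥0∞) ^ α * uF α (m + 1) := by
  unfold uF
  rcases Nat.eq_zero_or_pos m with rfl | hm
  · simp
  rw [if_pos hm, if_pos (by omega)]
  have h1 : ((m + 1 : ℕ) : ℝ≥0∞) ≤ 2 * (m : ℝ≥0∞) := by
    rw [two_mul]
    push_cast
    gcongr
    exact_mod_cast hm
  have h2 : ((m + 1 : ℕ) : ℝ≥0∞) ^ α ≤ (2 * (m : ℝ≥0∞)) ^ α :=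
    ENNReal.rpow_le_rpow h1 (by linarith)
  have h3 : (2 * (m : ℝ≥0∞)) ^ α = (2 : ℝ≥0∞) ^ α * (m : ℝ≥0∞) ^ α :=
    ENNReal.mul_rpow_of_ne_top (by simp) (ENNReal.natCast_ne_top m) α
  have h2ne0 : (2 : ℝ≥0∞) ^ α ≠ 0 := by
    intro h0
    rcases ENNReal.rpow_eq_zero_iff.mp h0 with ⟨hc, _⟩ | ⟨_, hc⟩
    · norm_num at hc
    · linarith
  have h2net : (2 : ℝ≥0∞) ^ α ≠ ⊤ := ENNReal.rpow_ne_top_of_nonneg (by linarith) (by simp)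
  rw [ENNReal.rpow_neg, ENNReal.rpow_neg]
  have hstep : ((2 * (m : ℝ≥0∞)) ^ α)⁻¹ ≤ (((m + 1 : ℕ) : ℝ≥0∞) ^ α)⁻¹ :=
    ENNReal.inv_le_inv.mpr (h3 ▸ h2)
  calc ((m : ℝ≥0∞) ^ α)⁻¹
      = (2 : ℝ≥0∞) ^ α * ((2 * (m : ℝ≥0∞)) ^ α)⁻¹ := by
        rw [h3, ENNReal.mul_inv (Or.inl h2ne0) (Or.inl h2net), ← mul_assoc,
          ENNReal.mul_inv_cancel h2ne0 h2net, one_mul]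
    _ ≤ (2 : ℝ≥0∞) ^ α * (((m + 1 : ℕ) : ℝ≥0∞) ^ α)⁻¹ := by gcongr
lemma Zmem (n : ℕ) : 0 < Z (n+1) ∧ (n+1) ∣ T (Z (n+1)) := by
  have hne : {m : ℕ | 0 < m ∧ (n+1) ∣ T m}.Nonempty := by
    refine ⟨2*n+1, by omega, ?_⟩
    have h : T (2*n+1) = (n+1) * (2*n+1) := by
      unfold T
      have : (2*n+1) * (2*n+1+1) = ((n+1) * (2*n+1)) * 2 := by ring
      rw [this, Nat.mul_div_cancel _ (by norm_num)]
    exact ⟨2*n+1, by rw [h]⟩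
  exact Nat.sInf_mem hne

lemma decompT (m : ℕ) : ∃ M M' : ℕ, M * M' = T m ∧ M ∣ m ∧ M' ∣ m + 1 := by
  rcases Nat.even_or_odd m with ⟨t, rfl⟩ | ⟨t, rfl⟩
  · refine ⟨t, t+t+1, ?_, ⟨2, by ring⟩, dvd_rfl⟩
    unfold T
    have : (t+t) * ((t+t) + 1) = (t * (t+t+1)) * 2 := by ring
    rw [this, Nat.mul_div_cancel _ (by norm_num)]
  · refine ⟨2*t+1, t+1, ?_, dvd_rfl, ⟨2, by ring⟩⟩
    unfold T
    have : (2*t+1) * ((2*t+1) + 1) = ((2*t+1) * (t+1)) * 2 := by ring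
    rw [this, Nat.mul_div_cancel _ (by norm_num)]

lemma splitZ (n : ℕ) : ∃ a b : ℕ, a * b = n + 1 ∧ a ∣ Z (n+1) ∧ b ∣ Z (n+1) + 1 := by
  obtain ⟨hpos, hdvd⟩ := Zmem n
  obtain ⟨M, M', hMM, hM, hM'⟩ := decompT (Z (n+1))
  have hcop : Nat.Coprime M M' := by
    have h1 : Nat.Coprime (Z (n+1)) (Z (n+1) + 1) := by simp [Nat.Coprime]
    exact Nat.Coprime.coprime_dvd_left hM (Nat.Coprime.coprime_dvd_right hM' h1)
  have h2 : (n+1) ∣ M * M' := by rw [hMM]; exact hdvd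
  have h3 := (Nat.gcd_mul_gcd_eq_iff_dvd_mul_of_coprime hcop).mpr h2
  exact ⟨Nat.gcd (n+1) M, Nat.gcd (n+1) M', h3,
    (Nat.gcd_dvd_right _ _).trans hM, (Nat.gcd_dvd_right _ _).trans hM'⟩

lemma hSzfin (hα : 1 < α) : (∑' k : ℕ, ((k : ℝ≥0∞) + 1) ^ (-α)) ≠ ⊤ := by
  have heq : ∀ k : ℕ, ((k : ℝ≥0∞) + 1) ^ (-α) = ((((k : ℝ≥0) + 1) ^ (-α) : ℝ≥0) : ℝ≥0∞) := by
    intro k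
    rw [ENNReal.coe_rpow_of_ne_zero (by positivity)]
    norm_cast
  simp_rw [heq]
  rw [ENNReal.tsum_coe_ne_top_iff_summable]
  have h1 : Summable (fun n : ℕ => (n : ℝ≥0) ^ (-α)) := NNReal.summable_rpow.2 (by linarith)
  have h2 := NNReal.summable_comp_injective h1 (add_left_injective 1)
  refine h2.congr fun k => ?_
  simp [Function.comp]


theorem stmt_19 (α : ℝ) (hα : 1 < α) :
    Summable (fun n : ℕ => 1 / (Z (n + 1) : ℝ) ^ α) := by
  set Sz := ∑' k : ℕ, ((k : ℝ≥0∞) + 1) ^ (-α) with hSz_def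
  have hSzt : Sz ≠ ⊤ := hSzfin hα
  choose a b hab ha hb using splitZ
  have hzpos : ∀ n : ℕ, 0 < Z (n + 1) := fun n => (Zmem n).1
  set G : ℕ × ℕ × ℕ → ℝ≥0∞ := fun p =>
    if 0 < p.1 ∧ p.2.1 ∣ p.1 ∧ p.2.2 ∣ p.1 + 1 then (p.1 : ℝ≥0∞) ^ (-α) else 0 with hG_def
  set Φ : ℕ → ℕ × ℕ × ℕ := fun n => (Z (n + 1), a n, b n) with hΦ_def
  have hΦinj : Function.Injective Φ := by
    intro n1 n2 h
    simp only [hΦ_def, Prod.mk.injEq] at h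
    have : n1 + 1 = n2 + 1 := by rw [← hab n1, ← hab n2, h.2.1, h.2.2]
    omega
  have hstep1 : (∑' n : ℕ, ((Z (n + 1) : ℝ≥0∞)) ^ (-α)) ≤ ∑' p, G p := by
    have hpt : ∀ n, ((Z (n + 1) : ℝ≥0∞)) ^ (-α) = G (Φ n) := by
      intro n
      simp only [hG_def, hΦ_def]
      rw [if_pos ⟨hzpos n, ha n, hb n⟩]
    calc (∑' n : ℕ, ((Z (n + 1) : ℝ≥0∞)) ^ (-α)) = ∑' n, G (Φ n) := tsum_congr hpt
      _ ≤ ∑' p, G p := tsum_comp_le_tsum_of_injective hΦinj G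
  have hG2 : (∑' p, G p) = ∑' m, uF α m * (DF m * DF (m + 1)) := by
    rw [ENNReal.tsum_prod']
    exact tsum_congr fun m => inner_eq hα m
  have hDD : ∀ m, uF α m * (DF m * DF (m + 1))
      ≤ uF α m * (DF m * DF m) + uF α m * (DF (m + 1) * DF (m + 1)) := by
    intro m
    rcases le_total (DF m) (DF (m + 1)) with h | h
    · calc uF α m * (DF m * DF (m + 1)) ≤ uF α m * (DF (m + 1) * DF (m + 1)) := by gcongr
        _ ≤ _ := le_add_self
    · calc uF α m * (DF m * DF (m + 1)) ≤ uF α m * (DF m * DF m) := by gcongr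
        _ ≤ _ := le_self_add
  have hA : (∑' m : ℕ, uF α m * (DF m * DF m)) ≤ Sz * (Sz * (Sz * Sz)) := by
    calc (∑' m : ℕ, uF α m * (DF m * DF m))
        = ∑' m : ℕ, ∑' q : ℕ × ℕ,
            (if 0 < m ∧ Nat.lcm q.1 q.2 ∣ m then (m : ℝ≥0∞) ^ (-α) else 0) :=
          tsum_congr fun m => inner_eq2 hα m
      _ = ∑' q : ℕ × ℕ, ∑' m : ℕ,
            (if 0 < m ∧ Nat.lcm q.1 q.2 ∣ m then (m : ℝ≥0∞) ^ (-α) else 0) := ENNReal.tsum_comm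
      _ ≤ ∑' q : ℕ × ℕ,
            (if 0 < Nat.lcm q.1 q.2 then ((Nat.lcm q.1 q.2 : ℕ) : ℝ≥0∞) ^ (-α) else 0) * Sz := by
          apply ENNReal.tsum_le_tsum
          intro q
          rcases Nat.eq_zero_or_pos (Nat.lcm q.1 q.2) with h0 | hL
          · have hz : ∀ m : ℕ,
                (if 0 < m ∧ Nat.lcm q.1 q.2 ∣ m then (m : ℝ≥0∞) ^ (-α) else 0) = 0 := by
              intro m
              rw [if_neg]
              rintro ⟨h1, h2⟩
              rw [h0] at h2
              exact absurd (Nat.eq_zero_of_zero_dvd h2) (by omega)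
            rw [tsum_congr hz, tsum_zero]
            exact zero_le
          · rw [mult_sum hα _ hL, if_pos hL]
      _ = (∑' q : ℕ × ℕ,
            (if 0 < Nat.lcm q.1 q.2 then ((Nat.lcm q.1 q.2 : ℕ) : ℝ≥0∞) ^ (-α) else 0)) * Sz :=
          ENNReal.tsum_mul_right
      _ ≤ (Sz * (Sz * Sz)) * Sz := by
          gcongr
          exact lcm_sum hα
      _ = Sz * (Sz * (Sz * Sz)) := by ring
  have hB : (∑' m : ℕ, uF α m * (DF (m + 1) * DF (m + 1)))
      ≤ (2 : ℝ≥0∞) ^ α * (∑' m : ℕ, uF α m * (DF m * DF m)) := by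
    calc (∑' m : ℕ, uF α m * (DF (m + 1) * DF (m + 1)))
        ≤ ∑' m : ℕ, (2 : ℝ≥0∞) ^ α * (uF α (m + 1) * (DF (m + 1) * DF (m + 1))) := by
          apply ENNReal.tsum_le_tsum
          intro m
          calc uF α m * (DF (m + 1) * DF (m + 1))
              ≤ ((2 : ℝ≥0∞) ^ α * uF α (m + 1)) * (DF (m + 1) * DF (m + 1)) :=
              mul_le_mul_left (uF_le hα m) _
            _ = _ := mul_assoc _ _ _
      _ = (2 : ℝ≥0∞) ^ α * ∑' m : ℕ, uF α (m + 1) * (DF (m + 1) * DF (m + 1)) :=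
          ENNReal.tsum_mul_left
      _ ≤ (2 : ℝ≥0∞) ^ α * ∑' k : ℕ, uF α k * (DF k * DF k) := by
          apply mul_le_mul_right
          exact tsum_comp_le_tsum_of_injective
            (fun x y h => by simpa using h : Function.Injective fun n : ℕ => n + 1) _
  have hSz4 : Sz * (Sz * (Sz * Sz)) ≠ ⊤ :=
    ENNReal.mul_ne_top hSzt (ENNReal.mul_ne_top hSzt (ENNReal.mul_ne_top hSzt hSzt))
  have h2net : (2 : ℝ≥0∞) ^ α ≠ ⊤ := ENNReal.rpow_ne_top_of_nonneg (by linarith) (by simp)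
  have htot : (∑' n : ℕ, ((Z (n + 1) : ℝ≥0∞)) ^ (-α)) ≠ ⊤ := by
    have hchain : (∑' n : ℕ, ((Z (n + 1) : ℝ≥0∞)) ^ (-α))
        ≤ Sz * (Sz * (Sz * Sz)) + (2 : ℝ≥0∞) ^ α * (Sz * (Sz * (Sz * Sz))) := by
      calc (∑' n : ℕ, ((Z (n + 1) : ℝ≥0∞)) ^ (-α))
          ≤ ∑' p, G p := hstep1
        _ = ∑' m, uF α m * (DF m * DF (m + 1)) := hG2
        _ ≤ ∑' m, (uF α m * (DF m * DF m) + uF α m * (DF (m + 1) * DF (m + 1))) :=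
            ENNReal.tsum_le_tsum hDD
        _ = (∑' m : ℕ, uF α m * (DF m * DF m))
              + ∑' m : ℕ, uF α m * (DF (m + 1) * DF (m + 1)) := ENNReal.tsum_add
        _ ≤ Sz * (Sz * (Sz * Sz)) + (2 : ℝ≥0∞) ^ α * (Sz * (Sz * (Sz * Sz))) := by
            gcongr
            exact hB.trans (mul_le_mul_right hA _)
    exact ne_top_of_le_ne_top (ENNReal.add_ne_top.mpr ⟨hSz4, ENNReal.mul_ne_top h2net hSz4⟩)
      hchain
  have hcoe : ∀ n : ℕ, ((Z (n + 1) : ℝ≥0∞)) ^ (-α)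
      = ((((Z (n + 1) : ℝ≥0)) ^ (-α) : ℝ≥0) : ℝ≥0∞) := by
    intro n
    rw [ENNReal.coe_rpow_of_ne_zero (by exact_mod_cast (hzpos n).ne')]
    norm_cast
  simp_rw [hcoe] at htot
  have hsum : Summable (fun n : ℕ => ((Z (n + 1) : ℝ≥0)) ^ (-α)) :=
    ENNReal.tsum_coe_ne_top_iff_summable.mp htot
  have hsumR := NNReal.summable_coe.mpr hsum
  refine hsumR.congr fun n => ?_
  rw [NNReal.coe_rpow, Real.rpow_neg (by positivity), one_div]
  norm_cast
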